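/- The quick algorithm computes the PPE step correctly: at node c with remaining set I, let s be the child whose subtree contains the outcome of I with the current player's maximum payoff, and let M be the current player's maximum payoff over outcomes of I in the other subtrees. Then the set of outcomes surviving all Newcombian-State discardings at c equals the set of outcomes of I in the subtree of s with current-player payoff greater than M, and the next move is s. -/

import Mathlib

open Classical

section PPE

variable {O C : Type*} [Fintype O] [DecidableEq O] [DecidableEq C]

/-- Target set of a Newcombian State (a list of children of the current node),
defined recursively from the remaining-outcome set `I`, the descendant map `D`
and the current player's payoff `pay`. -/
noncomputable def target (I : Finset O) (D : C → Finset O) (pay : O → ℤ) :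
    List C → Finset O
  | [] => ∅
  | [n] => I ∩ D n
  | n :: m :: p =>
      let Tp := target I D pay (m :: p)
      (I ∩ D n).filter (fun o => ¬ (Tp.Nonempty ∧ ∀ o' ∈ Tp, pay o < pay o'))

/-- A Newcombian State at the current node: a nonempty list of children with no
two consecutive elements equal. -/
def ValidState (F : Finset C) (η : List C) : Prop :=
  η ≠ [] ∧ (∀ n ∈ η, n ∈ F) ∧ η.Chain' (· ≠ ·)

/-- `o` is discarded by some Newcombian State at the current node. -/
def Discards (I : Finset O) (D : C → Finset O) (pay : O → ℤ) (F : Finset C)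
    (o : O) : Prop :=
  ∃ n p, ValidState F (n :: p) ∧ o ∈ I ∧ o ∉ D n ∧
    (target I D pay (n :: p)).Nonempty ∧
    ∀ o' ∈ target I D pay (n :: p), pay o < pay o'

/-- The set of outcomes remaining after the discarding process at the current node. -/
noncomputable def survivors (I : Finset O) (D : C → Finset O) (pay : O → ℤ)
    (F : Finset C) : Finset O :=
  I.filter (fun o => ¬ Discards I D pay F o)

/-- Worst payoff of a Newcombian State. -/
noncomputable def wp (I : Finset O) (D : C → Finset O) (pay : O → ℤ)
    (η : List C) : ℤ :=
  sInf (pay '' (target I D pay η : Set O))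

end PPE

section Aux

variable {O C : Type*} [Fintype O] [DecidableEq O] [DecidableEq C]

lemma target_single (I : Finset O) (D : C → Finset O) (pay : O → ℤ) (n : C) :
    target I D pay [n] = I ∩ D n := by
  simp [target]

lemma target_cons_cons (I : Finset O) (D : C → Finset O) (pay : O → ℤ)
    (n m : C) (p : List C) :
    target I D pay (n :: m :: p) =
      (I ∩ D n).filter (fun o =>
        ¬ ((target I D pay (m :: p)).Nonempty ∧
           ∀ o' ∈ target I D pay (m :: p), pay o < pay o')) := by
  simp [target]

lemma target_head_subset (I : Finset O) (D : C → Finset O) (pay : O → ℤ)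
    (n : C) (p : List C) :
    target I D pay (n :: p) ⊆ I ∩ D n := by
  cases p with
  | nil => rw [target_single]
  | cons m q => rw [target_cons_cons]; exact Finset.filter_subset _ _

lemma target_cons_eq_filter (I : Finset O) (D : C → Finset O) (pay : O → ℤ)
    (n m : C) (p : List C) (u : O)
    (hu : u ∈ target I D pay (m :: p))
    (humin : ∀ v ∈ target I D pay (m :: p), pay u ≤ pay v) :
    target I D pay (n :: m :: p) = (I ∩ D n).filter (fun o => pay u ≤ pay o) := by
  rw [target_cons_cons]
  ext o
  simp only [Finset.mem_filter]
  constructor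
  · rintro ⟨ho, hcond⟩
    refine ⟨ho, ?_⟩
    by_contra hlt
    push_neg at hlt
    exact hcond ⟨⟨u, hu⟩, fun o' ho' => lt_of_lt_of_le hlt (humin o' ho')⟩
  · rintro ⟨ho, hle⟩
    refine ⟨ho, ?_⟩
    rintro ⟨-, hall⟩
    exact absurd (hall u hu) (not_lt.mpr hle)

/-- `t` is the minimal payoff of the (nonempty) target of some valid state
headed by `s`. -/
def Reach (I : Finset O) (D : C → Finset O) (pay : O → ℤ) (F : Finset C)
    (s : C) (t : ℤ) : Prop :=
  ∃ p, ValidState F (s :: p) ∧ ∃ u ∈ target I D pay (s :: p),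
    pay u = t ∧ ∀ v ∈ target I D pay (s :: p), t ≤ pay v

lemma reach_step (I : Finset O) (D : C → Finset O) (pay : O → ℤ) (F : Finset C)
    (hdisj : ∀ c c' : C, c ≠ c' → Disjoint (D c) (D c'))
    (hpay : Function.Injective pay)
    (s : C) (omax : O) (homaxI : omax ∈ I) (homaxs : omax ∈ D s)
    (M : ℤ) (hMlt : M < pay omax)
    (hM2 : ∀ o ∈ I, o ∉ D s → pay o ≤ M)
    (c : C) (hc : c ∈ F) (hcs : c ≠ s)
    (t : ℤ) (ht : Reach I D pay F s t)
    (b : O) (hbI : b ∈ I) (hbc : b ∈ D c) (hbt : t ≤ pay b) :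
    ∃ t' b0, Reach I D pay F s t' ∧ b0 ∈ I ∧ b0 ∈ D c ∧
      t ≤ pay b0 ∧ pay b0 ≤ pay b ∧ pay b0 < t' ∧
      ∀ x ∈ I, x ∈ D s → pay b0 < pay x → t' ≤ pay x := by
  obtain ⟨p, hval, u, hu, hut, humin⟩ := ht
  have humin' : ∀ v ∈ target I D pay (s :: p), pay u ≤ pay v := by
    intro v hv; rw [hut]; exact humin v hv
  have hT2 : target I D pay (c :: s :: p)
      = (I ∩ D c).filter (fun o => pay u ≤ pay o) :=
    target_cons_eq_filter I D pay c s p u hu humin'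
  have hbT2 : b ∈ target I D pay (c :: s :: p) := by
    rw [hT2]
    exact Finset.mem_filter.mpr ⟨Finset.mem_inter.mpr ⟨hbI, hbc⟩, by rw [hut]; exact hbt⟩
  obtain ⟨b0, hb0T2, hb0min⟩ :=
    Finset.exists_min_image (target I D pay (c :: s :: p)) pay ⟨b, hbT2⟩
  have hb0mem : b0 ∈ I ∩ D c := by
    have h := hb0T2; rw [hT2] at h; exact (Finset.mem_filter.mp h).1
  obtain ⟨hb0I, hb0c⟩ := Finset.mem_inter.mp hb0mem
  have hb0ns : b0 ∉ D s := Finset.disjoint_left.mp (hdisj c s hcs) hb0c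
  have hub0 : pay u ≤ pay b0 := by
    have h := hb0T2; rw [hT2] at h; exact (Finset.mem_filter.mp h).2
  have hT3 : target I D pay (s :: c :: s :: p)
      = (I ∩ D s).filter (fun o => pay b0 ≤ pay o) :=
    target_cons_eq_filter I D pay s c (s :: p) b0 hb0T2 hb0min
  have homaxT3 : omax ∈ target I D pay (s :: c :: s :: p) := by
    rw [hT3]
    exact Finset.mem_filter.mpr ⟨Finset.mem_inter.mpr ⟨homaxI, homaxs⟩,
      le_of_lt (lt_of_le_of_lt (hM2 b0 hb0I hb0ns) hMlt)⟩
  obtain ⟨u', hu'T3, hu'min⟩ :=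
    Finset.exists_min_image (target I D pay (s :: c :: s :: p)) pay ⟨omax, homaxT3⟩
  obtain ⟨-, hmemF, hchain⟩ := hval
  have hval3 : ValidState F (s :: c :: s :: p) := by
    refine ⟨by simp, ?_, ?_⟩
    · intro n hn
      rcases List.mem_cons.mp hn with rfl | hn
      · exact hmemF n List.mem_cons_self
      rcases List.mem_cons.mp hn with rfl | hn
      · exact hc
      · exact hmemF n hn
    · exact List.isChain_cons_cons.mpr ⟨Ne.symm hcs, List.isChain_cons_cons.mpr ⟨hcs, hchain⟩⟩
  have hreach' : Reach I D pay F s (pay u') :=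
    ⟨c :: s :: p, hval3, u', hu'T3, rfl, fun v hv => hu'min v hv⟩
  have hb0u' : pay b0 ≤ pay u' := by
    have h := hu'T3; rw [hT3] at h; exact (Finset.mem_filter.mp h).2
  have hu's : u' ∈ D s := by
    have h := hu'T3
    exact (Finset.mem_inter.mp (target_head_subset I D pay s (c :: s :: p) h)).2
  have hb0u'lt : pay b0 < pay u' := by
    refine lt_of_le_of_ne hb0u' (fun h => ?_)
    exact hb0ns ((hpay h) ▸ hu's)
  refine ⟨pay u', b0, hreach', hb0I, hb0c, ?_, hb0min b hbT2, hb0u'lt, ?_⟩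
  · rw [← hut]; exact hub0
  · intro x hxI hxs hlt
    exact hu'min x (by
      rw [hT3]
      exact Finset.mem_filter.mpr ⟨Finset.mem_inter.mpr ⟨hxI, hxs⟩, le_of_lt hlt⟩)

end Aux

/-- correctness of the quick algorithm: if `s` is the child whose
subtree contains the outcome of `I` with the current player's maximum payoff,
and `M` is the maximum payoff over outcomes of `I` in the other subtrees, then
the surviving set equals the outcomes of `I` in the subtree of `s` with payoff
greater than `M`, and the next move is `s`. -/
theorem quick_algorithm_correct
    {O C : Type*} [Fintype O] [DecidableEq O] [DecidableEq C]
    (I : Finset O) (D : C → Finset O) (pay : O → ℤ) (F : Finset C)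
    (hI : I.Nonempty)
    (hcov : ∀ o ∈ I, ∃ c ∈ F, o ∈ D c)
    (hdisj : ∀ c c' : C, c ≠ c' → Disjoint (D c) (D c'))
    (hpay : Function.Injective pay)
    (s : C) (hs : s ∈ F)
    (omax : O) (homax : omax ∈ I ∩ D s) (hmax : ∀ o ∈ I, pay o ≤ pay omax)
    (M : ℤ) (hM1 : ∃ o ∈ I, o ∉ D s ∧ pay o = M)
    (hM2 : ∀ o ∈ I, o ∉ D s → pay o ≤ M) :
    survivors I D pay F = (I ∩ D s).filter (fun o => M < pay o) ∧
    survivors I D pay F ⊆ D s := by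
  classical
  obtain ⟨homaxI, homaxs⟩ := Finset.mem_inter.mp homax
  obtain ⟨w, hwI, hwns, hwM⟩ := hM1
  have hwomax : w ≠ omax := fun h => hwns (h ▸ homaxs)
  have hMlt : M < pay omax := by
    rcases lt_or_eq_of_le (hmax w hwI) with h | h
    · exact hwM ▸ h
    · exact absurd (hpay h) hwomax
  obtain ⟨cw, hcwF, hwcw⟩ := hcov w hwI
  have hcws : cw ≠ s := fun h => hwns (h ▸ hwcw)
  -- base reachable value : minimum payoff over I ∩ D s
  obtain ⟨u0, hu0A, hu0min⟩ := Finset.exists_min_image (I ∩ D s) pay ⟨omax, homax⟩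
  have hvalS : ValidState F [s] := by
    refine ⟨by simp, ?_, List.isChain_singleton s⟩
    intro n hn
    rcases List.mem_cons.mp hn with rfl | hn
    · exact hs
    · simp at hn
  have hbase : Reach I D pay F s (pay u0) := by
    refine ⟨[], hvalS, u0, ?_, rfl, ?_⟩
    · rw [target_single]; exact hu0A
    · intro v hv; rw [target_single] at hv; exact hu0min v hv
  have hreach_mem : ∀ t, Reach I D pay F s t → ∃ x ∈ I ∩ D s, pay x = t := by
    rintro t ⟨p, hval, u, hu, hut, -⟩
    exact ⟨u, target_head_subset I D pay s p hu, hut⟩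
  set RFin : Finset ℤ := ((I ∩ D s).image pay).filter (fun t => Reach I D pay F s t)
    with hRFin
  have hmemR : ∀ t, Reach I D pay F s t → t ∈ RFin := by
    intro t ht
    obtain ⟨x, hx, hxt⟩ := hreach_mem t ht
    exact Finset.mem_filter.mpr ⟨Finset.mem_image.mpr ⟨x, hx, hxt⟩, ht⟩
  have hRne : RFin.Nonempty := ⟨pay u0, hmemR _ hbase⟩
  set tstar := RFin.max' hRne with htstar
  have hts_reach : Reach I D pay F s tstar :=
    (Finset.mem_filter.mp (RFin.max'_mem hRne)).2
  have htsM : M < tstar := by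
    by_contra hle
    push_neg at hle
    have htsne : tstar ≠ M := by
      obtain ⟨x, hx, hxt⟩ := hreach_mem tstar hts_reach
      intro h
      have hxw : x = w := hpay (by rw [hxt, h, hwM])
      exact hwns (hxw ▸ (Finset.mem_inter.mp hx).2)
    have hlt : tstar ≤ pay w := by rw [hwM]; exact hle
    obtain ⟨t', b0, ht', -, -, htb0, -, hb0t', -⟩ :=
      reach_step I D pay F hdisj hpay s omax homaxI homaxs M hMlt hM2
        cw hcwF hcws tstar hts_reach w hwI hwcw hlt
    have : t' ≤ tstar := RFin.le_max' t' (hmemR t' ht')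
    omega
  -- every outcome outside D s is discarded
  have hdisc_out : ∀ o ∈ I, o ∉ D s → Discards I D pay F o := by
    intro o hoI hons
    obtain ⟨p, hval, u, hu, hut, humin⟩ := hts_reach
    exact ⟨s, p, hval, hoI, hons, ⟨u, hu⟩, fun v hv =>
      lt_of_le_of_lt (hM2 o hoI hons) (lt_of_lt_of_le htsM (humin v hv))⟩
  -- every outcome in D s with payoff ≤ M is discarded
  have hdisc_in : ∀ a ∈ I, a ∈ D s → pay a ≤ M → Discards I D pay F a := by
    intro a haI has haM
    set R2 := RFin.filter (fun t => t ≤ pay a) with hR2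
    have hR2ne : R2.Nonempty :=
      ⟨pay u0, Finset.mem_filter.mpr ⟨hmemR _ hbase,
        hu0min a (Finset.mem_inter.mpr ⟨haI, has⟩)⟩⟩
    set ta := R2.max' hR2ne with hta
    have htaR2 := R2.max'_mem hR2ne
    have hta_reach : Reach I D pay F s ta :=
      (Finset.mem_filter.mp ((Finset.mem_filter.mp htaR2).1)).2
    have hta_le : ta ≤ pay a := (Finset.mem_filter.mp htaR2).2
    have hta_reach2 := hta_reach
    obtain ⟨p, hval, u, hu, hut, humin⟩ := hta_reach
    have humin' : ∀ v ∈ target I D pay (s :: p), pay u ≤ pay v := by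
      intro v hv; rw [hut]; exact humin v hv
    have hT2 : target I D pay (cw :: s :: p)
        = (I ∩ D cw).filter (fun o => pay u ≤ pay o) :=
      target_cons_eq_filter I D pay cw s p u hu humin'
    have hwT2 : w ∈ target I D pay (cw :: s :: p) := by
      rw [hT2]
      refine Finset.mem_filter.mpr ⟨Finset.mem_inter.mpr ⟨hwI, hwcw⟩, ?_⟩
      rw [hut, ← hwM] at *
      omega
    obtain ⟨-, hmemF, hchain⟩ := hval
    have hval2 : ValidState F (cw :: s :: p) := by
      refine ⟨by simp, ?_, List.isChain_cons_cons.mpr ⟨hcws, hchain⟩⟩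
      intro n hn
      rcases List.mem_cons.mp hn with rfl | hn
      · exact hcwF
      · exact hmemF n hn
    have hacw : a ∉ D cw := Finset.disjoint_left.mp (hdisj s cw (Ne.symm hcws)) has
    have hall : ∀ b ∈ target I D pay (cw :: s :: p), pay a < pay b := by
      intro b hb
      have hb' := hb
      rw [hT2] at hb'
      obtain ⟨hbmem, hub⟩ := Finset.mem_filter.mp hb'
      obtain ⟨hbI, hbcw⟩ := Finset.mem_inter.mp hbmem
      by_contra hba
      push_neg at hba
      have hbna : b ≠ a := fun h =>
        (Finset.disjoint_left.mp (hdisj cw s hcws) hbcw) (by rw [h]; exact has)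
      have hblt : pay b < pay a := lt_of_le_of_ne hba (fun h => hbna (hpay h))
      have hbt : ta ≤ pay b := by rw [← hut]; exact hub
      obtain ⟨t', b0, ht', hb0I, hb0cw, htb0, hb0b, hb0t', hup⟩ :=
        reach_step I D pay F hdisj hpay s omax homaxI homaxs M hMlt hM2
          cw hcwF hcws ta hta_reach2 b hbI hbcw hbt
      have ht'a : t' ≤ pay a := hup a haI has (lt_of_le_of_lt hb0b hblt)
      have : t' ≤ ta := R2.le_max' t' (Finset.mem_filter.mpr ⟨hmemR t' ht', ht'a⟩)
      omega
    exact ⟨cw, s :: p, hval2, haI, hacw, ⟨w, hwT2⟩, hall⟩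
  -- assemble
  have hmain : survivors I D pay F = (I ∩ D s).filter (fun o => M < pay o) := by
    ext o
    simp only [survivors, Finset.mem_filter, Finset.mem_inter]
    constructor
    · rintro ⟨hoI, hnd⟩
      by_cases hos : o ∈ D s
      · refine ⟨⟨hoI, hos⟩, ?_⟩
        by_contra hM
        push_neg at hM
        exact hnd (hdisc_in o hoI hos hM)
      · exact absurd (hdisc_out o hoI hos) hnd
    · rintro ⟨⟨hoI, hos⟩, hMo⟩
      refine ⟨hoI, ?_⟩
      rintro ⟨n, p, hvaln, -, hon, ⟨v, hv⟩, hall⟩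
      by_cases hns : n = s
      · exact hon (by rw [hns]; exact hos)
      · have hvmem := target_head_subset I D pay n p hv
        obtain ⟨hvI, hvn⟩ := Finset.mem_inter.mp hvmem
        have hvns : v ∉ D s := Finset.disjoint_left.mp (hdisj n s hns) hvn
        have h1 := hM2 v hvI hvns
        have h2 := hall v hv
        omega
  refine ⟨hmain, ?_⟩
  rw [hmain]
  intro o ho
  exact (Finset.mem_inter.mp (Finset.mem_filter.mp ho).1).2
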